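/- Consider the (n+1)-layer linear BioCCPC network with c^{(l)} = 0 and fixed (ε-independent) weight matrices W_a^{(l)}, W_b^{(l)}, and for each ε ∈ (0, ε_0) let Q^{(l)}(ε) be interneuron weight matrices with ‖Q^{(l)}(ε)‖ bounded as ε → 0⁺. For training samples (x_t, y_t), t = 1, …, T+1, let z_t^{(l)}(ε) be the equilibrium latent variables of the neural dynamics (so that g_b W_b^{(l-1)}z_t^{(l-1)} + g_a W_a^{(l)⊤}z_t^{(l+1)} − g_b z_t^{(l)} − g_a Q^{(l)}(ε)^⊤Q^{(l)}(ε)z_t^{(l)} = 0 with z_t^{(0)} = x_t, z_t^{(n)} = y_t, ε = g_a/g_b), collected into data matrices Z^{(l)}(ε) over t = 1, …, T, and assume Z^{(l-1)}(ε)Z^{(l-1)}(ε)^⊤ is invertible with inverse bounded as ε → 0⁺. Suppose the learning-rule equilibrium Q^{(l)}(ε)^⊤Q^{(l)}(ε)Z^{(l)}(ε)Z^{(l-1)}(ε)^⊤ = W_a^{(l)⊤}Z^{(l+1)}(ε)Z^{(l-1)}(ε)^⊤ holds over the first T samples. Then the basal weight update for the new sample, δW_b^{(l-1)} ∝ ε(W_a^{(l)⊤}z_{T+1}^{(l+1)}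 − Q^{(l)}(ε)^⊤Q^{(l)}(ε)z_{T+1}^{(l)})z_{T+1}^{(l-1)⊤}, satisfies δW_b^{(l-1)} = ε^{n-l}[W_a^{(l)⊤}W_a^{(l+1)⊤}⋯W_a^{(n-1)⊤}(y_{T+1} − ỹ_{T+1}(ε))]z_{T+1}^{(l-1)}(ε)^⊤ + O(ε^{n-l+1}) as ε → 0⁺, where ỹ_{T+1}(ε) = Y Z^{(l-1)}(ε)^⊤(Z^{(l-1)}(ε)Z^{(l-1)}(ε)^⊤)^{-1}z_{T+1}^{(l-1)}(ε) is the optimal linear prediction of y_{T+1} from z_{T+1}^{(l-1)}, and Y = [y_1, …, y_T]. -/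

import Mathlib

set_option maxHeartbeats 1000000

open Matrix


private lemma mv_bound' {p q : ℕ} {A : Matrix (Fin p) (Fin q) ℝ} {v : Fin q → ℝ} {cA cv DD : ℝ}
    (hq : (q : ℝ) ≤ DD) (hcA : 0 ≤ cA) (hcv : 0 ≤ cv)
    (hA : ∀ i j, |A i j| ≤ cA) (hv : ∀ j, |v j| ≤ cv) :
    ∀ i, |(A *ᵥ v) i| ≤ DD * cA * cv := by
  intro i
  have h1 : |(A *ᵥ v) i| ≤ ∑ j, |A i j * v j| := by
    simpa [Matrix.mulVec, dotProduct] using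
      Finset.abs_sum_le_sum_abs (fun j => A i j * v j) Finset.univ
  have h2 : ∑ j, |A i j * v j| ≤ ∑ _j : Fin q, cA * cv := by
    refine Finset.sum_le_sum fun j _ => ?_
    rw [abs_mul]
    exact mul_le_mul (hA i j) (hv j) (abs_nonneg _) hcA
  have h3 : (∑ _j : Fin q, cA * cv) = (q : ℝ) * (cA * cv) := by simp
  calc |(A *ᵥ v) i| ≤ (q : ℝ) * (cA * cv) := by rw [← h3]; exact h1.trans h2
    _ ≤ DD * cA * cv := by
        rw [mul_assoc]
        exact mul_le_mul_of_nonneg_right hq (by positivity)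

private lemma entry_le_absSum {p q : ℕ} (A : Matrix (Fin p) (Fin q) ℝ) (i : Fin p) (j : Fin q) :
    |A i j| ≤ ∑ i', ∑ j', |A i' j'| := by
  have h1 : |A i j| ≤ ∑ j', |A i j'| :=
    Finset.single_le_sum (f := fun j' => |A i j'|) (fun _ _ => abs_nonneg _) (Finset.mem_univ j)
  exact h1.trans (Finset.single_le_sum (f := fun i' => ∑ j', |A i' j'|)
    (fun _ _ => Finset.sum_nonneg fun _ _ => abs_nonneg _) (Finset.mem_univ i))


/-- **The basal weight update implicitly encodes the backpropagated prediction error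
(Proposition 1).**  In the `(n+1)`-layer linear BioCCPC network (`n = m + 1`) with
`c^{(l)} = 0`, fixed weights `W_a, W_b`, interneuron weights `Q^{(l)}(ε)` bounded as
`ε → 0⁺`, equilibrium latents `z_t^{(l)}(ε)` for samples `t = 0, …, T` (sample `T` being
new), invertible layer-`l₀` Gram matrix with bounded inverse, and the learning-rule
equilibrium `Q^ᵀQ Z^{(l₀+1)} Z^{(l₀)ᵀ} = W_a^ᵀ Z^{(l₀+2)} Z^{(l₀)ᵀ}` over the first `T`
samples, the basal update `δW_b ∝ ε (W_aᵀ z^{(l₀+2)} − QᵀQ z^{(l₀+1)}) z^{(l₀)ᵀ}` for the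
new sample satisfies
`δW_b = ε^{n-l} [W_a^{(l)ᵀ}⋯W_a^{(n-1)ᵀ} (y − ỹ)] z^{(l-1)ᵀ} + O(ε^{n-l+1})`
(with `l = l₀ + 1`), where `ỹ` is the optimal linear prediction of the new output from the
previous-layer activity. -/
theorem bioccpc_basal_update_encodes_error
    (m : ℕ) (hm : 1 ≤ m) (d kk : ℕ → ℕ)
    (Wb Wa : (l : ℕ) → Matrix (Fin (d (l + 1))) (Fin (d l)) ℝ)
    (T : ℕ) -- samples `0, …, T - 1` are the training set; sample `T` is the new datapoint
    (x : ℕ → Fin (d 0) → ℝ) (y : ℕ → Fin (d (m + 1)) → ℝ)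
    (ε₀ : ℝ) (hε₀ : 0 < ε₀)
    -- interneuron weights, bounded as `ε → 0⁺`
    (Q : ℝ → (l : ℕ) → Matrix (Fin (kk l)) (Fin (d l)) ℝ)
    (CQ : ℝ)
    (hQbound : ∀ ε ∈ Set.Ioo (0 : ℝ) ε₀, ∀ l, l ≤ m → ∀ i j, |Q ε l i j| ≤ CQ)
    -- conductances with `ε = g_a / g_b`
    (ga gb : ℝ → ℝ)
    (hg : ∀ ε ∈ Set.Ioo (0 : ℝ) ε₀, 0 < ga ε ∧ 0 < gb ε ∧ ε = ga ε / gb ε)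
    -- equilibrium latents for each sample
    (z : ℝ → ℕ → (l : ℕ) → Fin (d l) → ℝ)
    (hboundary : ∀ ε ∈ Set.Ioo (0 : ℝ) ε₀, ∀ t, t ≤ T →
      z ε t 0 = x t ∧ z ε t (m + 1) = y t)
    (hequil : ∀ ε ∈ Set.Ioo (0 : ℝ) ε₀, ∀ t, t ≤ T → ∀ l, l < m →
      gb ε • (Wb l *ᵥ z ε t l) + ga ε • ((Wa (l + 1))ᵀ *ᵥ z ε t (l + 2))
        - gb ε • z ε t (l + 1)
        - ga ε • ((Q ε (l + 1))ᵀ *ᵥ (Q ε (l + 1) *ᵥ z ε t (l + 1))) = 0)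
    -- data matrices collecting the first `T` samples
    (Zmat : ℝ → (l : ℕ) → Matrix (Fin (d l)) (Fin T) ℝ)
    (hZmat : ∀ ε l, Zmat ε l = Matrix.of fun i (t : Fin T) => z ε (t : ℕ) l i)
    (Ymat : Matrix (Fin (d (m + 1))) (Fin T) ℝ)
    (hYmat : Ymat = Matrix.of fun i (t : Fin T) => y (t : ℕ) i)
    -- the hidden layer under consideration is `l = l₀ + 1`, with `1 ≤ l ≤ m = n - 1`
    (l₀ : ℕ) (hl₀ : l₀ < m)
    -- the previous-layer Gram matrix is invertible with inverse bounded as `ε → 0⁺`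
    (CG : ℝ)
    (hGram : ∀ ε ∈ Set.Ioo (0 : ℝ) ε₀,
      IsUnit (Zmat ε l₀ * (Zmat ε l₀)ᵀ).det ∧
      ∀ i j, |(Zmat ε l₀ * (Zmat ε l₀)ᵀ)⁻¹ i j| ≤ CG)
    -- the learning-rule equilibrium over the first `T` samples
    (hlearn : ∀ ε ∈ Set.Ioo (0 : ℝ) ε₀,
      (Q ε (l₀ + 1))ᵀ * Q ε (l₀ + 1) * Zmat ε (l₀ + 1) * (Zmat ε l₀)ᵀ
        = (Wa (l₀ + 1))ᵀ * Zmat ε (l₀ + 2) * (Zmat ε l₀)ᵀ)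
    -- the chain of transposed feedback weights `chain j = W_a^{(j)ᵀ} ⋯ W_a^{(m)ᵀ}`
    (chain : (j : ℕ) → Matrix (Fin (d j)) (Fin (d (m + 1))) ℝ)
    (hchainTop : chain (m + 1) = 1)
    (hchain : ∀ j, j ≤ m → chain j = (Wa j)ᵀ * chain (j + 1))
    -- the optimal linear prediction of the new output from the previous-layer activity
    (ytil : ℝ → Fin (d (m + 1)) → ℝ)
    (hytil : ∀ ε, ytil ε = Ymat *ᵥ ((Zmat ε l₀)ᵀ *ᵥ
      ((Zmat ε l₀ * (Zmat ε l₀)ᵀ)⁻¹ *ᵥ z ε T l₀)))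
    -- the basal weight update induced by the new sample
    (δWb : ℝ → Matrix (Fin (d (l₀ + 1))) (Fin (d l₀)) ℝ)
    (hδWb : ∀ ε, δWb ε = ε • vecMulVec
      ((Wa (l₀ + 1))ᵀ *ᵥ z ε T (l₀ + 2)
        - (Q ε (l₀ + 1))ᵀ *ᵥ (Q ε (l₀ + 1) *ᵥ z ε T (l₀ + 1)))
      (z ε T l₀)) :
    ∃ K ε₁ : ℝ, 0 < K ∧ 0 < ε₁ ∧
      ∀ ε ∈ Set.Ioo (0 : ℝ) (min ε₀ ε₁), ∀ i j,
        |δWb ε i j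
          - ε ^ (m - l₀) *
            vecMulVec (chain (l₀ + 1) *ᵥ (y T - ytil ε)) (z ε T l₀) i j|
          ≤ K * ε ^ (m - l₀ + 1) := by
  classical
  -- ## Constants
  obtain ⟨CQ', hCQ'def⟩ : ∃ CQ' : ℝ, CQ' = max CQ 0 := ⟨_, rfl⟩
  have hCQ'0 : (0:ℝ) ≤ CQ' := by rw [hCQ'def]; exact le_max_right _ _
  have hQb : ∀ ε ∈ Set.Ioo (0:ℝ) ε₀, ∀ l, l ≤ m → ∀ i j, |Q ε l i j| ≤ CQ' :=
    fun ε hε l hl i j => (hQbound ε hε l hl i j).trans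
      (by rw [hCQ'def]; exact le_max_left _ _)
  obtain ⟨CG', hCG'def⟩ : ∃ CG' : ℝ, CG' = max CG 0 := ⟨_, rfl⟩
  have hCG'0 : (0:ℝ) ≤ CG' := by rw [hCG'def]; exact le_max_right _ _
  have hGb : ∀ ε ∈ Set.Ioo (0:ℝ) ε₀, ∀ i j, |(Zmat ε l₀ * (Zmat ε l₀)ᵀ)⁻¹ i j| ≤ CG' :=
    fun ε hε i j => ((hGram ε hε).2 i j).trans
      (by rw [hCG'def]; exact le_max_left _ _)
  obtain ⟨C1, hC1def⟩ : ∃ C1 : ℝ, C1 = (∑ l ∈ Finset.range (m+1),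
      ((∑ i, ∑ j, |Wb l i j|) + (∑ i, ∑ j, |Wa l i j|))) + CQ' + 1 := ⟨_, rfl⟩
  have hsum_nonneg : ∀ l ∈ Finset.range (m+1),
      0 ≤ (∑ i, ∑ j, |Wb l i j|) + (∑ i, ∑ j, |Wa l i j|) := fun l _ => by positivity
  have hsum0 : 0 ≤ ∑ l ∈ Finset.range (m+1),
      ((∑ i, ∑ j, |Wb l i j|) + (∑ i, ∑ j, |Wa l i j|)) := Finset.sum_nonneg hsum_nonneg
  have hC11 : 1 ≤ C1 := by rw [hC1def]; linarith
  have hC10 : 0 ≤ C1 := by linarith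
  have hWbB : ∀ l, l ≤ m → ∀ i j, |Wb l i j| ≤ C1 := by
    intro l hl i j
    have h1 : |Wb l i j| ≤ (∑ i', ∑ j', |Wb l i' j'|) + (∑ i', ∑ j', |Wa l i' j'|) := by
      have := entry_le_absSum (Wb l) i j
      have h0 : (0:ℝ) ≤ ∑ i', ∑ j', |Wa l i' j'| := by positivity
      linarith
    have h2 := Finset.single_le_sum hsum_nonneg (Finset.mem_range.mpr (by omega : l < m + 1))
    rw [hC1def]; linarith
  have hWaB : ∀ l, l ≤ m → ∀ i j, |Wa l i j| ≤ C1 := by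
    intro l hl i j
    have h1 : |Wa l i j| ≤ (∑ i', ∑ j', |Wb l i' j'|) + (∑ i', ∑ j', |Wa l i' j'|) := by
      have := entry_le_absSum (Wa l) i j
      have h0 : (0:ℝ) ≤ ∑ i', ∑ j', |Wb l i' j'| := by positivity
      linarith
    have h2 := Finset.single_le_sum hsum_nonneg (Finset.mem_range.mpr (by omega : l < m + 1))
    rw [hC1def]; linarith
  have hQC1 : CQ' ≤ C1 := by rw [hC1def]; linarith
  obtain ⟨D, hDdef⟩ : ∃ D : ℕ, D = (∑ l ∈ Finset.range (m+2), (d l + kk l)) + T + 1 := ⟨_, rfl⟩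
  have hsumD : ∀ l, l ≤ m + 1 → d l + kk l ≤ ∑ l' ∈ Finset.range (m+2), (d l' + kk l') :=
    fun l hl => Finset.single_le_sum (f := fun l' => d l' + kk l') (fun _ _ => Nat.zero_le _)
      (Finset.mem_range.mpr (by omega : l < m + 2))
  have hdD : ∀ l, l ≤ m + 1 → (d l : ℝ) ≤ (D:ℝ) := by
    intro l hl; have := hsumD l hl; exact_mod_cast (by omega : d l ≤ D)
  have hkD : ∀ l, l ≤ m + 1 → (kk l : ℝ) ≤ (D:ℝ) := by
    intro l hl; have := hsumD l hl; exact_mod_cast (by omega : kk l ≤ D)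
  have hTD : (T : ℝ) ≤ (D:ℝ) := by exact_mod_cast (by omega : T ≤ D)
  have hD1 : (1:ℝ) ≤ (D:ℝ) := by exact_mod_cast (by omega : 1 ≤ D)
  obtain ⟨cX, hcXdef⟩ : ∃ cX : ℝ, cX = ∑ t ∈ Finset.range (T+1), ∑ i, |x t i| := ⟨_, rfl⟩
  have hcX0 : 0 ≤ cX := by rw [hcXdef]; positivity
  have hxB : ∀ t, t ≤ T → ∀ i, |x t i| ≤ cX := by
    intro t ht i
    calc |x t i| ≤ ∑ i', |x t i'| :=
          Finset.single_le_sum (f := fun i' => |x t i'|) (fun _ _ => abs_nonneg _) (Finset.mem_univ i)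
      _ ≤ cX := by
          rw [hcXdef]
          exact Finset.single_le_sum (f := fun t' => ∑ i', |x t' i'|)
            (fun _ _ => by positivity) (Finset.mem_range.mpr (by omega))
  obtain ⟨cY, hcYdef⟩ : ∃ cY : ℝ, cY = ∑ t ∈ Finset.range (T+1), ∑ i, |y t i| := ⟨_, rfl⟩
  have hcY0 : 0 ≤ cY := by rw [hcYdef]; positivity
  have hyB : ∀ t, t ≤ T → ∀ i, |y t i| ≤ cY := by
    intro t ht i
    calc |y t i| ≤ ∑ i', |y t i'| :=
          Finset.single_le_sum (f := fun i' => |y t i'|) (fun _ _ => abs_nonneg _) (Finset.mem_univ i)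
      _ ≤ cY := by
          rw [hcYdef]
          exact Finset.single_le_sum (f := fun t' => ∑ i', |y t' i'|)
            (fun _ _ => by positivity) (Finset.mem_range.mpr (by omega))
  -- ## the scalar equilibrium equation
  have hga : ∀ ε ∈ Set.Ioo (0:ℝ) ε₀, ga ε = ε * gb ε := by
    intro ε hε
    obtain ⟨h1, h2, h3⟩ := hg ε hε
    exact ((eq_div_iff h2.ne').mp h3).symm
  have hzeq : ∀ ε ∈ Set.Ioo (0:ℝ) ε₀, ∀ t, t ≤ T → ∀ l, l < m →
      z ε t (l+1) = Wb l *ᵥ z ε t l + ε • ((Wa (l+1))ᵀ *ᵥ z ε t (l+2))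
        - ε • ((Q ε (l+1))ᵀ *ᵥ (Q ε (l+1) *ᵥ z ε t (l+1))) := by
    intro ε hε t ht l hl
    have h := hequil ε hε t ht l hl
    have hgb := (hg ε hε).2.1
    have hgaeq := hga ε hε
    funext i
    have hi := congrFun h i
    simp only [Pi.add_apply, Pi.sub_apply, Pi.smul_apply, smul_eq_mul, Pi.zero_apply] at hi
    simp only [Pi.add_apply, Pi.sub_apply, Pi.smul_apply, smul_eq_mul]
    rw [hgaeq] at hi
    have hfac : gb ε * (z ε t (l+1) i - ((Wb l *ᵥ z ε t l) i
        + ε * ((Wa (l+1))ᵀ *ᵥ z ε t (l+2)) i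
        - ε * ((Q ε (l+1))ᵀ *ᵥ (Q ε (l+1) *ᵥ z ε t (l+1))) i)) = 0 := by
      linear_combination -hi
    have := (mul_eq_zero.mp hfac).resolve_left hgb.ne'
    linarith [this]
  -- ## matrix-vector bound helpers
  obtain ⟨a, hadef⟩ : ∃ a : ℝ, a = (D:ℝ) * C1 := ⟨_, rfl⟩
  have ha1 : 1 ≤ a := by
    have := mul_le_mul hD1 hC11 (by norm_num : (0:ℝ) ≤ 1) (by linarith : (0:ℝ) ≤ (D:ℝ))
    rw [hadef]; linarith
  have ha0 : (0:ℝ) ≤ a := by linarith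
  have mvWb : ∀ l, l ≤ m → ∀ (v : Fin (d l) → ℝ) (c : ℝ), 0 ≤ c → (∀ i, |v i| ≤ c) →
      ∀ i, |(Wb l *ᵥ v) i| ≤ a * c := by
    intro l hl v c hc hv i
    have h := mv_bound' (hdD l (by omega)) hC10 hc (hWbB l hl) hv i
    rw [hadef]; exact h
  have mvWaT : ∀ l, l ≤ m → ∀ (v : Fin (d (l+1)) → ℝ) (c : ℝ), 0 ≤ c → (∀ i, |v i| ≤ c) →
      ∀ i, |((Wa l)ᵀ *ᵥ v) i| ≤ a * c := by
    intro l hl v c hc hv i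
    have hA : ∀ i j, |(Wa l)ᵀ i j| ≤ C1 := fun i j => by
      rw [Matrix.transpose_apply]; exact hWaB l hl j i
    have h := mv_bound' (hdD (l+1) (by omega)) hC10 hc hA hv i
    rw [hadef]; exact h
  have mvQQ : ∀ ε ∈ Set.Ioo (0:ℝ) ε₀, ∀ l, l ≤ m → ∀ (v : Fin (d l) → ℝ) (c : ℝ),
      0 ≤ c → (∀ i, |v i| ≤ c) →
      ∀ i, |((Q ε l)ᵀ *ᵥ (Q ε l *ᵥ v)) i| ≤ a * (a * c) := by
    intro ε hε l hl v c hc hv i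
    have hQl : ∀ i j, |Q ε l i j| ≤ C1 := fun i j => (hQb ε hε l hl i j).trans hQC1
    have hinner : ∀ i', |(Q ε l *ᵥ v) i'| ≤ (D:ℝ) * C1 * c := fun i' =>
      mv_bound' (hdD l (by omega)) hC10 hc hQl hv i'
    have hQTl : ∀ i j, |(Q ε l)ᵀ i j| ≤ C1 := fun i j => by
      rw [Matrix.transpose_apply]; exact hQl j i
    have h := mv_bound' (hkD l (by omega)) hC10
      (by have := mul_nonneg (mul_nonneg (Nat.cast_nonneg D) hC10) hc; linarith) hQTl hinner i
    rw [hadef]; exact h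
  -- ## Step 1 : uniform boundedness of the latents
  obtain ⟨Cz, εz, hCz1, hεz0, hεz1, hzbd⟩ :
      ∃ Cz εz : ℝ, 1 ≤ Cz ∧ 0 < εz ∧ εz ≤ 1 ∧ ∀ ε ∈ Set.Ioo (0:ℝ) (min ε₀ εz),
        ∀ t, t ≤ T → ∀ l, l ≤ m + 1 → ∀ i, |z ε t l i| ≤ Cz := by
    obtain ⟨b, hbdef⟩ : ∃ b : ℝ, b = a + a * a := ⟨_, rfl⟩
    have hb0 : 0 ≤ b := by rw [hbdef]; linarith [mul_nonneg ha0 ha0]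
    have hpm0 : (0:ℝ) ≤ a^m := pow_nonneg ha0 m
    have hpm1 : (1:ℝ) ≤ a^m := one_le_pow₀ ha1
    obtain ⟨A1, hA1def⟩ : ∃ A1 : ℝ, A1 = (D:ℝ) * a^m * (cX+1) + cX + cY + 1 := ⟨_, rfl⟩
    have hA11 : 1 ≤ A1 := by
      have h0 : (0:ℝ) ≤ (D:ℝ) * a^m * (cX+1) :=
        mul_nonneg (mul_nonneg (by linarith) hpm0) (by linarith)
      rw [hA1def]; linarith
    obtain ⟨B1, hB1def⟩ : ∃ B1 : ℝ, B1 = (D:ℝ) * (m:ℝ) * a^m * b + 1 := ⟨_, rfl⟩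
    have hB11 : 1 ≤ B1 := by
      rw [hB1def]
      linarith [mul_nonneg (mul_nonneg (mul_nonneg (by linarith : (0:ℝ) ≤ (D:ℝ)) (Nat.cast_nonneg m)) hpm0) hb0]
    have hB1pos : (0:ℝ) < B1 := by linarith
    refine ⟨2*A1, min (1/(2*B1)) 1, by linarith,
      lt_min (div_pos one_pos (by linarith)) one_pos, min_le_right _ _, ?_⟩
    intro ε hε t ht l hl i
    have hεpos : 0 < ε := hε.1
    have hεε₀ : ε ∈ Set.Ioo (0:ℝ) ε₀ := ⟨hεpos, hε.2.trans_le (min_le_left _ _)⟩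
    have hεB : ε ≤ 1/(2*B1) :=
      le_of_lt (hε.2.trans_le ((min_le_right _ _).trans (min_le_left _ _)))
    obtain ⟨S', hS'def⟩ : ∃ S' : ℝ, S' = (∑ l' ∈ Finset.Icc 1 m, ∑ i', |z ε t l' i'|) + cX + cY := ⟨_, rfl⟩
    have hsumS0 : (0:ℝ) ≤ ∑ l' ∈ Finset.Icc 1 m, ∑ i', |z ε t l' i'| := by positivity
    have hS'0 : 0 ≤ S' := by rw [hS'def]; positivity
    have hall : ∀ l', l' ≤ m + 1 → ∀ i', |z ε t l' i'| ≤ S' := by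
      intro l' hl' i'
      rcases Nat.eq_zero_or_pos l' with h0 | hpos
      · subst h0
        rw [(hboundary ε hεε₀ t ht).1]
        rw [hS'def]; linarith [hxB t ht i']
      · rcases Nat.lt_or_ge l' (m+1) with hlt | hge
        · have hmem : l' ∈ Finset.Icc 1 m := Finset.mem_Icc.mpr ⟨hpos, by omega⟩
          have h1 : |z ε t l' i'| ≤ ∑ i'', |z ε t l' i''| :=
            Finset.single_le_sum (f := fun i'' => |z ε t l' i''|)
              (fun _ _ => abs_nonneg _) (Finset.mem_univ i')
          have h2 : (∑ i'', |z ε t l' i''|) ≤ ∑ l'' ∈ Finset.Icc 1 m, ∑ i'', |z ε t l'' i''| :=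
            Finset.single_le_sum (f := fun l'' => ∑ i'', |z ε t l'' i''|)
              (fun _ _ => by positivity) hmem
          rw [hS'def]; linarith
        · have hl'' : l' = m + 1 := by omega
          subst hl''
          rw [(hboundary ε hεε₀ t ht).2]
          rw [hS'def]; linarith [hyB t ht i']
    have claim : ∀ j, j ≤ m → ∀ i', |z ε t j i'| ≤ a^j * (cX+1) + (j:ℝ) * a^j * (ε * b * S') := by
      intro j
      induction j with
      | zero =>
        intro hj i'
        rw [(hboundary ε hεε₀ t ht).1]
        simp only [pow_zero, Nat.cast_zero, one_mul, zero_mul, add_zero]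
        have := hxB t ht i'
        linarith
      | succ n ih =>
        intro hj i'
        have hn : n ≤ m := by omega
        have hnm : n < m := by omega
        have hzi := congrFun (hzeq ε hεε₀ t ht n hnm) i'
        simp only [Pi.add_apply, Pi.sub_apply, Pi.smul_apply, smul_eq_mul] at hzi
        have hc0 : 0 ≤ a^n * (cX+1) + (n:ℝ) * a^n * (ε*b*S') := by
          have g1 : (0:ℝ) ≤ a^n * (cX+1) := mul_nonneg (pow_nonneg ha0 n) (by linarith)
          have g2 : (0:ℝ) ≤ (n:ℝ) * a^n * (ε*b*S') :=
            mul_nonneg (mul_nonneg (Nat.cast_nonneg n) (pow_nonneg ha0 n))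
              (mul_nonneg (mul_nonneg hεpos.le hb0) hS'0)
          linarith
        have h1 := mvWb n hn (z ε t n) _ hc0 (ih hn) i'
        have h2 := mvWaT (n+1) (by omega) (z ε t (n+2)) S' hS'0 (hall (n+2) (by omega)) i'
        have h3 := mvQQ ε hεε₀ (n+1) (by omega) (z ε t (n+1)) S' hS'0 (hall (n+1) (by omega)) i'
        have h2' : ε * |((Wa (n+1))ᵀ *ᵥ z ε t (n+2)) i'| ≤ ε * (a * S') :=
          mul_le_mul_of_nonneg_left h2 hεpos.le
        have h3' : ε * |((Q ε (n+1))ᵀ *ᵥ (Q ε (n+1) *ᵥ z ε t (n+1))) i'| ≤ ε * (a * (a * S')) :=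
          mul_le_mul_of_nonneg_left h3 hεpos.le
        have habs : |z ε t (n+1) i'| ≤ |(Wb n *ᵥ z ε t n) i'|
            + ε * |((Wa (n+1))ᵀ *ᵥ z ε t (n+2)) i'|
            + ε * |((Q ε (n+1))ᵀ *ᵥ (Q ε (n+1) *ᵥ z ε t (n+1))) i'| := by
          rw [hzi]
          calc |(Wb n *ᵥ z ε t n) i' + ε * ((Wa (n+1))ᵀ *ᵥ z ε t (n+2)) i'
              - ε * ((Q ε (n+1))ᵀ *ᵥ (Q ε (n+1) *ᵥ z ε t (n+1))) i'|
              ≤ |(Wb n *ᵥ z ε t n) i' + ε * ((Wa (n+1))ᵀ *ᵥ z ε t (n+2)) i'|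
                + |ε * ((Q ε (n+1))ᵀ *ᵥ (Q ε (n+1) *ᵥ z ε t (n+1))) i'| := by
                rw [sub_eq_add_neg]
                exact (abs_add_le _ _).trans_eq (by rw [abs_neg])
            _ ≤ |(Wb n *ᵥ z ε t n) i'| + |ε * ((Wa (n+1))ᵀ *ᵥ z ε t (n+2)) i'|
                + |ε * ((Q ε (n+1))ᵀ *ᵥ (Q ε (n+1) *ᵥ z ε t (n+1))) i'| := by
                linarith [abs_add_le ((Wb n *ᵥ z ε t n) i') (ε * ((Wa (n+1))ᵀ *ᵥ z ε t (n+2)) i')]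
            _ = |(Wb n *ᵥ z ε t n) i'| + ε * |((Wa (n+1))ᵀ *ᵥ z ε t (n+2)) i'|
                + ε * |((Q ε (n+1))ᵀ *ᵥ (Q ε (n+1) *ᵥ z ε t (n+1))) i'| := by
                rw [abs_mul, abs_mul, abs_of_pos hεpos]
        have hpow : a^(n+1) = a^n * a := pow_succ a n
        have h1ap : (1:ℝ) ≤ a^(n+1) := one_le_pow₀ ha1
        push_cast
        calc |z ε t (n+1) i'|
            ≤ a * (a^n * (cX+1) + (n:ℝ) * a^n * (ε*b*S')) + ε * (a * S') + ε * (a * (a * S')) := by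
              linarith
          _ = a^(n+1) * (cX+1) + (n:ℝ) * a^(n+1) * (ε*b*S') + ε*b*S' := by
              rw [hbdef, hpow]; ring
          _ ≤ a^(n+1) * (cX+1) + ((n:ℝ)+1) * a^(n+1) * (ε*b*S') := by
              have hXX : ε*b*S' ≤ a^(n+1)*(ε*b*S') :=
                le_mul_of_one_le_left (mul_nonneg (mul_nonneg hεpos.le hb0) hS'0) h1ap
              have hexp2 : ((n:ℝ)+1)*a^(n+1)*(ε*b*S')
                  = (n:ℝ)*a^(n+1)*(ε*b*S') + a^(n+1)*(ε*b*S') := by ring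
              linarith
    -- sum the per-layer bounds
    obtain ⟨M, hMdef⟩ : ∃ M : ℝ, M = a^m * (cX+1) + (m:ℝ) * a^m * (ε*b*S') := ⟨_, rfl⟩
    have hM0 : 0 ≤ M := by
      have g1 : (0:ℝ) ≤ a^m * (cX+1) := mul_nonneg hpm0 (by linarith)
      have g2 : (0:ℝ) ≤ (m:ℝ) * a^m * (ε*b*S') :=
        mul_nonneg (mul_nonneg (Nat.cast_nonneg m) hpm0)
          (mul_nonneg (mul_nonneg hεpos.le hb0) hS'0)
      rw [hMdef]; linarith
    have hsum1 : (∑ l' ∈ Finset.Icc 1 m, ∑ i', |z ε t l' i'|)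
        ≤ (∑ l' ∈ Finset.Icc 1 m, (d l' : ℝ)) * M := by
      rw [Finset.sum_mul]
      refine Finset.sum_le_sum fun l' hl' => ?_
      obtain ⟨h1l, h2l⟩ := Finset.mem_Icc.mp hl'
      have hcl : ∀ i', |z ε t l' i'| ≤ M := by
        intro i'
        have hcl1 := claim l' h2l i'
        have hmono1 : a^l' ≤ a^m := pow_le_pow_right₀ ha1 h2l
        have hlm : (l':ℝ) ≤ (m:ℝ) := by exact_mod_cast h2l
        have hmono2 : (l':ℝ)*a^l' ≤ (m:ℝ)*a^m :=
          mul_le_mul hlm hmono1 (pow_nonneg ha0 l') (Nat.cast_nonneg m)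
        rw [hMdef]
        have hebs0 : (0:ℝ) ≤ ε*b*S' := mul_nonneg (mul_nonneg hεpos.le hb0) hS'0
        linarith [mul_le_mul_of_nonneg_right hmono2 hebs0,
          mul_le_mul_of_nonneg_right hmono1 (by linarith : (0:ℝ) ≤ cX + 1)]
      calc (∑ i', |z ε t l' i'|) ≤ ∑ _i' : Fin (d l'), M :=
            Finset.sum_le_sum (fun i' _ => hcl i')
        _ = (d l' : ℝ) * M := by
            rw [Finset.sum_const, Finset.card_univ, Fintype.card_fin, nsmul_eq_mul]
    have hsum2 : (∑ l' ∈ Finset.Icc 1 m, (d l' : ℝ)) ≤ (D:ℝ) := by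
      have h1 : (∑ l' ∈ Finset.Icc 1 m, d l') ≤ D := by
        have h2 : ∑ l' ∈ Finset.Icc 1 m, d l' ≤ ∑ l' ∈ Finset.Icc 1 m, (d l' + kk l') :=
          Finset.sum_le_sum fun _ _ => Nat.le_add_right _ _
        have h3 : ∑ l' ∈ Finset.Icc 1 m, (d l' + kk l')
            ≤ ∑ l' ∈ Finset.range (m+2), (d l' + kk l') := by
          apply Finset.sum_le_sum_of_subset
          intro u hu
          simp only [Finset.mem_Icc, Finset.mem_range] at *
          omega
        omega
      calc (∑ l' ∈ Finset.Icc 1 m, (d l' : ℝ)) = ((∑ l' ∈ Finset.Icc 1 m, d l' : ℕ) : ℝ) := by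
            push_cast; ring
        _ ≤ (D:ℝ) := by exact_mod_cast h1
    have hDM : (∑ l' ∈ Finset.Icc 1 m, (d l' : ℝ)) * M ≤ (D:ℝ) * M :=
      mul_le_mul_of_nonneg_right hsum2 hM0
    have hSfin : S' ≤ A1 + B1 * ε * S' := by
      have hexp : (D:ℝ) * M = (D:ℝ)*a^m*(cX+1) + (D:ℝ)*(m:ℝ)*a^m*b*ε*S' := by
        rw [hMdef]; ring
      have hεS0 : (0:ℝ) ≤ ε * S' := mul_nonneg hεpos.le hS'0
      have hchain2 := hsum1.trans hDM
      have hrhs : B1*ε*S' = (D:ℝ)*(m:ℝ)*a^m*b*ε*S' + ε*S' := by rw [hB1def]; ring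
      have hexp3 : (D:ℝ)*a^m*(cX+1) + (D:ℝ)*(m:ℝ)*a^m*b*ε*S' = (D:ℝ) * M := by
        rw [hMdef]; ring
      linarith [hS'def.le, hS'def.ge, hA1def.le, hA1def.ge]
    have hB1ε : B1 * ε ≤ 1/2 := by
      have h := mul_le_mul_of_nonneg_left hεB hB1pos.le
      have heq : B1 * (1/(2*B1)) = 1/2 := by field_simp
      linarith
    have hhalf : B1 * ε * S' ≤ (1/2) * S' :=
      mul_le_mul_of_nonneg_right hB1ε hS'0
    have hS2A : S' ≤ 2 * A1 := by linarith
    exact (hall l hl i).trans hS2A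
  -- ## Step 2 : the projection vector and error vectors
  have hCz0 : (0:ℝ) ≤ Cz := by linarith
  obtain ⟨P, hPdef⟩ : ∃ P : ℝ → Fin T → ℝ, ∀ ε, P ε
      = (Zmat ε l₀)ᵀ *ᵥ ((Zmat ε l₀ * (Zmat ε l₀)ᵀ)⁻¹ *ᵥ z ε T l₀) := ⟨_, fun _ => rfl⟩
  obtain ⟨e, hedef⟩ : ∃ e : ℝ → (j : ℕ) → Fin (d j) → ℝ, ∀ ε j, e ε j
      = z ε T j - Zmat ε j *ᵥ P ε := ⟨fun ε j => z ε T j - Zmat ε j *ᵥ P ε, fun _ _ => rfl⟩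
  obtain ⟨w, hwdef⟩ : ∃ w : ℝ → Fin (d (m+1)) → ℝ, ∀ ε, w ε = y T - ytil ε := ⟨_, fun _ => rfl⟩
  have hsub : ∀ ε ∈ Set.Ioo (0:ℝ) (min ε₀ εz), ε ∈ Set.Ioo (0:ℝ) ε₀ :=
    fun ε hε => ⟨hε.1, hε.2.trans_le (min_le_left _ _)⟩
  have hZb : ∀ ε ∈ Set.Ioo (0:ℝ) (min ε₀ εz), ∀ l, l ≤ m + 1 → ∀ i j, |Zmat ε l i j| ≤ Cz := by
    intro ε hε l hl i j
    rw [hZmat]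
    exact hzbd ε hε (j:ℕ) j.2.le l hl i
  obtain ⟨CP, hCPdef⟩ : ∃ CP : ℝ, CP = (D:ℝ)*Cz*((D:ℝ)*CG'*Cz) := ⟨_, rfl⟩
  have hCP0 : 0 ≤ CP := by
    rw [hCPdef]
    exact mul_nonneg (mul_nonneg (by linarith) hCz0)
      (mul_nonneg (mul_nonneg (by linarith) hCG'0) hCz0)
  have hPb : ∀ ε ∈ Set.Ioo (0:ℝ) (min ε₀ εz), ∀ j, |P ε j| ≤ CP := by
    intro ε hε j
    rw [hPdef ε, hCPdef]
    have hGi : ∀ i', |((Zmat ε l₀ * (Zmat ε l₀)ᵀ)⁻¹ *ᵥ z ε T l₀) i'| ≤ (D:ℝ)*CG'*Cz :=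
      mv_bound' (hdD l₀ (by omega)) hCG'0 hCz0 (hGb ε (hsub ε hε))
        (fun i' => hzbd ε hε T le_rfl l₀ (by omega) i')
    have hZT : ∀ i' j', |(Zmat ε l₀)ᵀ i' j'| ≤ Cz := fun i' j' => by
      rw [Matrix.transpose_apply]; exact hZb ε hε l₀ (by omega) j' i'
    exact mv_bound' (hdD l₀ (by omega)) hCz0
      (mul_nonneg (mul_nonneg (by linarith) hCG'0) hCz0) hZT hGi j
  have hZPb : ∀ ε ∈ Set.Ioo (0:ℝ) (min ε₀ εz), ∀ l, l ≤ m + 1 →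
      ∀ i, |(Zmat ε l *ᵥ P ε) i| ≤ (D:ℝ)*Cz*CP := by
    intro ε hε l hl i
    exact mv_bound' hTD hCz0 hCP0 (hZb ε hε l hl) (hPb ε hε) i
  obtain ⟨Ce, hCedef⟩ : ∃ Ce : ℝ, Ce = Cz + (D:ℝ)*Cz*CP := ⟨_, rfl⟩
  have hCe1 : 1 ≤ Ce := by
    rw [hCedef]
    have := mul_nonneg (mul_nonneg (by linarith : (0:ℝ) ≤ (D:ℝ)) hCz0) hCP0
    linarith
  have heb : ∀ ε ∈ Set.Ioo (0:ℝ) (min ε₀ εz), ∀ j, j ≤ m + 1 → ∀ i, |e ε j i| ≤ Ce := by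
    intro ε hε j hj i
    rw [hedef, hCedef]
    have h1 := hzbd ε hε T le_rfl j hj i
    have h2 := hZPb ε hε j hj i
    calc |(z ε T j - Zmat ε j *ᵥ P ε) i| = |z ε T j i - (Zmat ε j *ᵥ P ε) i| := by
          rw [Pi.sub_apply]
      _ ≤ |z ε T j i| + |(Zmat ε j *ᵥ P ε) i| := abs_sub _ _
      _ ≤ Cz + (D:ℝ)*Cz*CP := add_le_add h1 h2
  -- ## Step 3 : the recursion satisfied by the error vectors
  have hZrec : ∀ ε ∈ Set.Ioo (0:ℝ) ε₀, ∀ l, l < m →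
      Zmat ε (l+1) = Wb l * Zmat ε l + ε • ((Wa (l+1))ᵀ * Zmat ε (l+2))
        - ε • ((Q ε (l+1))ᵀ * (Q ε (l+1) * Zmat ε (l+1))) := by
    intro ε hε l hl
    ext i t
    have h := congrFun (hzeq ε hε (t:ℕ) t.2.le l hl) i
    simp only [Pi.add_apply, Pi.sub_apply, Pi.smul_apply, smul_eq_mul,
      Matrix.mulVec, dotProduct] at h
    simp only [hZmat, Matrix.sub_apply, Matrix.add_apply, Matrix.smul_apply,
      Matrix.mul_apply, Matrix.of_apply, smul_eq_mul, Matrix.mulVec, dotProduct]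
    convert h using 3
  have herec : ∀ ε ∈ Set.Ioo (0:ℝ) (min ε₀ εz), ∀ l, l < m →
      e ε (l+1) = Wb l *ᵥ e ε l + ε • ((Wa (l+1))ᵀ *ᵥ e ε (l+2))
        - ε • ((Q ε (l+1))ᵀ *ᵥ (Q ε (l+1) *ᵥ e ε (l+1))) := by
    intro ε hε l hl
    have hz1 := hzeq ε (hsub ε hε) T le_rfl l hl
    have hZ1 := congrArg (fun M => M *ᵥ P ε) (hZrec ε (hsub ε hε) l hl)
    simp only [Matrix.sub_mulVec, Matrix.add_mulVec, Matrix.smul_mulVec,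
      ← Matrix.mulVec_mulVec] at hZ1
    simp only [hedef]
    conv_lhs => rw [hz1, hZ1]
    simp only [Matrix.mulVec_sub, smul_sub]
    abel
  have he0 : ∀ ε ∈ Set.Ioo (0:ℝ) (min ε₀ εz), e ε l₀ = 0 := by
    intro ε hε
    have hdet := (hGram ε (hsub ε hε)).1
    have hid : Zmat ε l₀ *ᵥ P ε = z ε T l₀ := by
      rw [hPdef ε, Matrix.mulVec_mulVec, Matrix.mulVec_mulVec,
        Matrix.mul_nonsing_inv _ hdet, Matrix.one_mulVec]
    rw [hedef, hid, sub_self]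
  have hYZ : ∀ ε ∈ Set.Ioo (0:ℝ) (min ε₀ εz), Zmat ε (m+1) = Ymat := by
    intro ε hε
    ext i t
    rw [hZmat, hYmat]
    simp only [Matrix.of_apply]
    exact congrFun (hboundary ε (hsub ε hε) (t:ℕ) t.2.le).2 i
  have hetop : ∀ ε ∈ Set.Ioo (0:ℝ) (min ε₀ εz), e ε (m+1) = w ε := by
    intro ε hε
    rw [hedef, hwdef, hYZ ε hε, (hboundary ε (hsub ε hε) T le_rfl).2, hytil ε, hPdef ε]
  have hQZP : ∀ ε ∈ Set.Ioo (0:ℝ) (min ε₀ εz),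
      (Q ε (l₀+1))ᵀ *ᵥ (Q ε (l₀+1) *ᵥ (Zmat ε (l₀+1) *ᵥ P ε))
        = (Wa (l₀+1))ᵀ *ᵥ (Zmat ε (l₀+2) *ᵥ P ε) := by
    intro ε hε
    have hl := congrArg (fun M => M *ᵥ ((Zmat ε l₀ * (Zmat ε l₀)ᵀ)⁻¹ *ᵥ z ε T l₀))
      (hlearn ε (hsub ε hε))
    simp only [← Matrix.mulVec_mulVec] at hl
    rw [hPdef ε]
    exact hl
  have heps : ∀ ε ∈ Set.Ioo (0:ℝ) (min ε₀ εz),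
      e ε (l₀+1) = ε • ((Wa (l₀+1))ᵀ *ᵥ z ε T (l₀+2)
        - (Q ε (l₀+1))ᵀ *ᵥ (Q ε (l₀+1) *ᵥ z ε T (l₀+1))) := by
    intro ε hε
    have h := herec ε hε l₀ hl₀
    rw [he0 ε hε, Matrix.mulVec_zero] at h
    rw [h]
    have h2 : e ε (l₀+2) = z ε T (l₀+2) - Zmat ε (l₀+2) *ᵥ P ε := hedef ε (l₀+2)
    have h1 : e ε (l₀+1) = z ε T (l₀+1) - Zmat ε (l₀+1) *ᵥ P ε := hedef ε (l₀+1)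
    rw [h1, h2]
    simp only [Matrix.mulVec_sub, smul_sub]
    rw [hQZP ε hε]
    abel
  -- ## Step 4 : crude bounds |e^j| ≤ C ε^{m+1-j}
  obtain ⟨B, hBdef⟩ : ∃ B : ℝ, B = a + a*a + 1 := ⟨_, rfl⟩
  have hB1 : 1 ≤ B := by rw [hBdef]; linarith [mul_nonneg ha0 ha0]
  have hB0 : 0 ≤ B := by linarith
  have hboot : ∀ k : ℕ, ∃ C : ℝ, 1 ≤ C ∧ ∀ ε ∈ Set.Ioo (0:ℝ) (min ε₀ εz),
      ∀ j, l₀ ≤ j → j ≤ m + 1 →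
      ∀ i, |e ε j i| ≤ C * ε ^ (min k (m + 1 - j)) := by
    intro k
    induction k with
    | zero =>
      exact ⟨Ce, hCe1, fun ε hε j hj1 hj2 i => by
        simpa using heb ε hε j hj2 i⟩
    | succ k ih =>
      obtain ⟨C, hC1', hCb⟩ := ih
      have hC0 : (0:ℝ) ≤ C := by linarith
      have hBm2 : (1:ℝ) ≤ B^(m+2) := one_le_pow₀ hB1
      refine ⟨B ^ (m + 2) * C, hC1'.trans (le_mul_of_one_le_left hC0 hBm2), ?_⟩
      intro ε hε j hj1 hj2 i
      have hεpos : 0 < ε := hε.1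
      have hε1 : ε ≤ 1 := le_of_lt (hε.2.trans_le ((min_le_right _ _).trans hεz1))
      rcases Nat.lt_or_ge j (m+1) with hjm | hjm
      · have main : ∀ j', l₀ ≤ j' → j' ≤ m →
            ∀ i', |e ε j' i'| ≤ B^(j'+1) * C * ε^(min (k+1) (m+1-j')) := by
          intro j' hj'
          induction j', hj' using Nat.le_induction with
          | base =>
            intro hjm' i'
            rw [he0 ε hε]
            simp only [Pi.zero_apply, abs_zero]
            exact mul_nonneg (mul_nonneg (pow_nonneg hB0 _) hC0) (pow_nonneg hεpos.le _)
          | succ n hn ihn =>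
            intro hn1 i'
            have hnm : n < m := by omega
            have hri := congrFun (herec ε hε n hnm) i'
            simp only [Pi.add_apply, Pi.sub_apply, Pi.smul_apply, smul_eq_mul] at hri
            have hbprev : ∀ i'', |e ε n i''| ≤ B^(n+1)*C*ε^(min (k+1) (m+1-n)) :=
              ihn (by omega)
            have hcwn : 0 ≤ B^(n+1)*C*ε^(min (k+1) (m+1-n)) :=
              mul_nonneg (mul_nonneg (pow_nonneg hB0 _) hC0) (pow_nonneg hεpos.le _)
            have h1 := mvWb n (by omega) (e ε n) _ hcwn hbprev i'
            have hcw2 : 0 ≤ C * ε^(min k (m+1-(n+2))) :=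
              mul_nonneg hC0 (pow_nonneg hεpos.le _)
            have h2 := mvWaT (n+1) (by omega) (e ε (n+2)) _ hcw2
              (hCb ε hε (n+2) (by omega) (by omega)) i'
            have hcw3 : 0 ≤ C * ε^(min k (m+1-(n+1))) :=
              mul_nonneg hC0 (pow_nonneg hεpos.le _)
            have h3 := mvQQ ε (hsub ε hε) (n+1) (by omega) (e ε (n+1)) _ hcw3
              (hCb ε hε (n+1) (by omega) (by omega)) i'
            have hm1 : ε^(min (k+1) (m+1-n)) ≤ ε^(min (k+1) (m+1-(n+1))) :=
              pow_le_pow_of_le_one hεpos.le hε1 (by omega)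
            have hm2 : ε * ε^(min k (m+1-(n+2))) ≤ ε^(min (k+1) (m+1-(n+1))) := by
              rw [← pow_succ']
              exact pow_le_pow_of_le_one hεpos.le hε1 (by omega)
            have hm3 : ε * ε^(min k (m+1-(n+1))) ≤ ε^(min (k+1) (m+1-(n+1))) := by
              rw [← pow_succ']
              exact pow_le_pow_of_le_one hεpos.le hε1 (by omega)
            have habs : |e ε (n+1) i'| ≤ |(Wb n *ᵥ e ε n) i'|
                + ε * |((Wa (n+1))ᵀ *ᵥ e ε (n+2)) i'|
                + ε * |((Q ε (n+1))ᵀ *ᵥ (Q ε (n+1) *ᵥ e ε (n+1))) i'| := by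
              rw [hri]
              calc |(Wb n *ᵥ e ε n) i' + ε * ((Wa (n+1))ᵀ *ᵥ e ε (n+2)) i'
                  - ε * ((Q ε (n+1))ᵀ *ᵥ (Q ε (n+1) *ᵥ e ε (n+1))) i'|
                  ≤ |(Wb n *ᵥ e ε n) i' + ε * ((Wa (n+1))ᵀ *ᵥ e ε (n+2)) i'|
                    + |ε * ((Q ε (n+1))ᵀ *ᵥ (Q ε (n+1) *ᵥ e ε (n+1))) i'| := by
                    rw [sub_eq_add_neg]
                    exact (abs_add_le _ _).trans_eq (by rw [abs_neg])
                _ ≤ |(Wb n *ᵥ e ε n) i'| + |ε * ((Wa (n+1))ᵀ *ᵥ e ε (n+2)) i'|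
                    + |ε * ((Q ε (n+1))ᵀ *ᵥ (Q ε (n+1) *ᵥ e ε (n+1))) i'| := by
                    linarith [abs_add_le ((Wb n *ᵥ e ε n) i')
                      (ε * ((Wa (n+1))ᵀ *ᵥ e ε (n+2)) i')]
                _ = |(Wb n *ᵥ e ε n) i'| + ε * |((Wa (n+1))ᵀ *ᵥ e ε (n+2)) i'|
                    + ε * |((Q ε (n+1))ᵀ *ᵥ (Q ε (n+1) *ᵥ e ε (n+1))) i'| := by
                    rw [abs_mul, abs_mul, abs_of_pos hεpos]
            have ht0 : (0:ℝ) ≤ ε^(min (k+1) (m+1-(n+1))) := pow_nonneg hεpos.le _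
            have e1 : a * (B^(n+1)*C*ε^(min (k+1) (m+1-n)))
                ≤ a*B^(n+1)*C*ε^(min (k+1) (m+1-(n+1))) := by
              calc a * (B^(n+1)*C*ε^(min (k+1) (m+1-n)))
                  = a*B^(n+1)*C*ε^(min (k+1) (m+1-n)) := by ring
                _ ≤ a*B^(n+1)*C*ε^(min (k+1) (m+1-(n+1))) :=
                    mul_le_mul_of_nonneg_left hm1
                      (mul_nonneg (mul_nonneg ha0 (pow_nonneg hB0 _)) hC0)
            have e2 : ε * (a * (C * ε^(min k (m+1-(n+2)))))
                ≤ a*C*ε^(min (k+1) (m+1-(n+1))) := by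
              calc ε * (a * (C * ε^(min k (m+1-(n+2)))))
                  = a*C*(ε * ε^(min k (m+1-(n+2)))) := by ring
                _ ≤ a*C*ε^(min (k+1) (m+1-(n+1))) :=
                    mul_le_mul_of_nonneg_left hm2 (mul_nonneg ha0 hC0)
            have e3 : ε * (a * (a * (C * ε^(min k (m+1-(n+1))))))
                ≤ a*a*C*ε^(min (k+1) (m+1-(n+1))) := by
              calc ε * (a * (a * (C * ε^(min k (m+1-(n+1))))))
                  = a*a*C*(ε * ε^(min k (m+1-(n+1)))) := by ring
                _ ≤ a*a*C*ε^(min (k+1) (m+1-(n+1))) :=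
                    mul_le_mul_of_nonneg_left hm3 (mul_nonneg (mul_nonneg ha0 ha0) hC0)
            have hgeB : B ≤ B^(n+1) := by
              calc B = B^1 := (pow_one B).symm
                _ ≤ B^(n+1) := pow_le_pow_right₀ hB1 (by omega)
            have hkey : a*B^(n+1) + a + a*a ≤ B^(n+2) := by
              have hBs : B^(n+2) = B*B^(n+1) := by rw [← pow_succ']
              have hBn0 : (0:ℝ) < B^(n+1) := lt_of_lt_of_le one_pos (one_le_pow₀ hB1)
              have h5 : B^(n+1) ≤ (a*a+1)*B^(n+1) :=
                le_mul_of_one_le_left hBn0.le (by linarith [mul_nonneg ha0 ha0])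
              have h6 : a + a*a + 1 ≤ B^(n+1) := by rw [← hBdef]; exact hgeB
              have h7 : B*B^(n+1) = a*B^(n+1) + (a*a+1)*B^(n+1) := by rw [hBdef]; ring
              linarith [h5, h6, hBs, h7]
            have h2' : ε * |((Wa (n+1))ᵀ *ᵥ e ε (n+2)) i'|
                ≤ ε * (a * (C * ε^(min k (m+1-(n+2))))) :=
              mul_le_mul_of_nonneg_left h2 hεpos.le
            have h3' : ε * |((Q ε (n+1))ᵀ *ᵥ (Q ε (n+1) *ᵥ e ε (n+1))) i'|
                ≤ ε * (a * (a * (C * ε^(min k (m+1-(n+1)))))) :=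
              mul_le_mul_of_nonneg_left h3 hεpos.le
            calc |e ε (n+1) i'|
                ≤ a*B^(n+1)*C*ε^(min (k+1) (m+1-(n+1)))
                  + a*C*ε^(min (k+1) (m+1-(n+1)))
                  + a*a*C*ε^(min (k+1) (m+1-(n+1))) := by linarith
              _ = (a*B^(n+1) + a + a*a)*(C*ε^(min (k+1) (m+1-(n+1)))) := by ring
              _ ≤ B^(n+2)*(C*ε^(min (k+1) (m+1-(n+1)))) :=
                  mul_le_mul_of_nonneg_right hkey
                    (mul_nonneg hC0 (pow_nonneg hεpos.le _))
              _ = B^(n+2)*C*ε^(min (k+1) (m+1-(n+1))) := by ring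
        calc |e ε j i| ≤ B^(j+1)*C*ε^(min (k+1) (m+1-j)) := main j hj1 (by omega) i
          _ ≤ B^(m+2)*C*ε^(min (k+1) (m+1-j)) :=
              mul_le_mul_of_nonneg_right
                (mul_le_mul_of_nonneg_right (pow_le_pow_right₀ hB1 (by omega)) hC0)
                (pow_nonneg hεpos.le _)
      · have hj : j = m+1 := by omega
        subst hj
        have h := hCb ε hε (m+1) (by omega) le_rfl i
        simp only [Nat.sub_self, Nat.min_zero, pow_zero, mul_one] at h ⊢
        calc |e ε (m+1) i| ≤ C := h
          _ ≤ B^(m+2)*C := le_mul_of_one_le_left hC0 hBm2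
  obtain ⟨Cc, hCc1, hcrude⟩ : ∃ Cc : ℝ, 1 ≤ Cc ∧ ∀ ε ∈ Set.Ioo (0:ℝ) (min ε₀ εz),
      ∀ j, l₀ ≤ j → j ≤ m + 1 → ∀ i, |e ε j i| ≤ Cc * ε^(m+1-j) := by
    obtain ⟨C, hC1', hCb⟩ := hboot (m+1)
    refine ⟨C, hC1', fun ε hε j hj1 hj2 i => ?_⟩
    have h := hCb ε hε j hj1 hj2 i
    rwa [min_eq_right (by omega)] at h
  have hCc0 : (0:ℝ) ≤ Cc := by linarith
  -- ## Step 5 : the refined expansion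
  have href : ∀ s : ℕ, ∃ C : ℝ, 0 < C ∧ ∀ j, l₀ + 1 ≤ j → j + s = m + 1 →
      ∀ ε ∈ Set.Ioo (0:ℝ) (min ε₀ εz), ∀ i,
      |e ε j i - ε^s * (chain j *ᵥ w ε) i| ≤ C * ε^(s+1) := by
    intro s
    induction s with
    | zero =>
      refine ⟨1, one_pos, fun j hj1 hj2 ε hε i => ?_⟩
      have hj : j = m+1 := by omega
      subst hj
      rw [hetop ε hε, hchainTop, Matrix.one_mulVec]
      simp only [pow_zero, one_mul, sub_self, abs_zero]
      have h01 : (0:ℝ) ≤ ε^(0+1) := pow_nonneg hε.1.le _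
      linarith
    | succ s ih =>
      obtain ⟨C, hC0, hCb⟩ := ih
      have hg1 : (0:ℝ) ≤ a*Cc := mul_nonneg ha0 hCc0
      have hg2 : (0:ℝ) ≤ a*C := mul_nonneg ha0 hC0.le
      have hg3 : (0:ℝ) ≤ a*a*Cc := mul_nonneg (mul_nonneg ha0 ha0) hCc0
      refine ⟨a*Cc + a*C + a*a*Cc + 1, by linarith, ?_⟩
      intro j hj1 hj2 ε hε i
      obtain ⟨l, rfl⟩ : ∃ l, j = l + 1 := ⟨j-1, by omega⟩
      have hl0 : l₀ ≤ l := by omega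
      have hlm : l < m := by omega
      have hl1m : l + 1 ≤ m := by omega
      have hεpos : 0 < ε := hε.1
      have hε1 : ε ≤ 1 := le_of_lt (hε.2.trans_le ((min_le_right _ _).trans hεz1))
      have hrec := herec ε hε l hlm
      obtain ⟨δ, hδdef⟩ : ∃ δ : Fin (d (l+2)) → ℝ,
          δ = e ε (l+2) - ε^s • (chain (l+2) *ᵥ w ε) := ⟨_, rfl⟩
      have hδb : ∀ i', |δ i'| ≤ C * ε^(s+1) := by
        intro i'
        rw [hδdef]
        simp only [Pi.sub_apply, Pi.smul_apply, smul_eq_mul]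
        exact hCb (l+2) (by omega) (by omega) ε hε i'
      have hcrl : ∀ i', |e ε l i'| ≤ Cc * ε^(s+2) := by
        intro i'
        have h := hcrude ε hε l hl0 (by omega) i'
        rwa [show m+1-l = s+2 from by omega] at h
      have hcrl1 : ∀ i', |e ε (l+1) i'| ≤ Cc * ε^(s+1) := by
        intro i'
        have h := hcrude ε hε (l+1) (by omega) (by omega) i'
        rwa [show m+1-(l+1) = s+1 from by omega] at h
      have h1 := mvWb l (by omega) (e ε l) _
        (mul_nonneg hCc0 (pow_nonneg hεpos.le _)) hcrl i
      have h2 := mvWaT (l+1) hl1m δ _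
        (mul_nonneg hC0.le (pow_nonneg hεpos.le _)) hδb i
      have h3 := mvQQ ε (hsub ε hε) (l+1) hl1m (e ε (l+1)) _
        (mul_nonneg hCc0 (pow_nonneg hεpos.le _)) hcrl1 i
      have hcc : ((Wa (l+1))ᵀ *ᵥ (chain (l+2) *ᵥ w ε)) i = (chain (l+1) *ᵥ w ε) i := by
        rw [Matrix.mulVec_mulVec, ← hchain (l+1) hl1m]
      have hWδ2 : ((Wa (l+1))ᵀ *ᵥ δ) i = ((Wa (l+1))ᵀ *ᵥ e ε (l+2)) i
          - ε^s * ((Wa (l+1))ᵀ *ᵥ (chain (l+2) *ᵥ w ε)) i := by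
        rw [hδdef, Matrix.mulVec_sub, Matrix.mulVec_smul]
        simp only [Pi.sub_apply, Pi.smul_apply, smul_eq_mul]
      have hri := congrFun hrec i
      simp only [Pi.add_apply, Pi.sub_apply, Pi.smul_apply, smul_eq_mul] at hri
      have hkey : e ε (l+1) i - ε^(s+1) * (chain (l+1) *ᵥ w ε) i
          = (Wb l *ᵥ e ε l) i + ε * ((Wa (l+1))ᵀ *ᵥ δ) i
            - ε * ((Q ε (l+1))ᵀ *ᵥ (Q ε (l+1) *ᵥ e ε (l+1))) i := by
        rw [hWδ2, hcc, hri, pow_succ]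
        ring
      have habs : |e ε (l+1) i - ε^(s+1) * (chain (l+1) *ᵥ w ε) i|
          ≤ |(Wb l *ᵥ e ε l) i| + ε * |((Wa (l+1))ᵀ *ᵥ δ) i|
            + ε * |((Q ε (l+1))ᵀ *ᵥ (Q ε (l+1) *ᵥ e ε (l+1))) i| := by
        rw [hkey]
        calc |(Wb l *ᵥ e ε l) i + ε * ((Wa (l+1))ᵀ *ᵥ δ) i
            - ε * ((Q ε (l+1))ᵀ *ᵥ (Q ε (l+1) *ᵥ e ε (l+1))) i|
            ≤ |(Wb l *ᵥ e ε l) i + ε * ((Wa (l+1))ᵀ *ᵥ δ) i|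
              + |ε * ((Q ε (l+1))ᵀ *ᵥ (Q ε (l+1) *ᵥ e ε (l+1))) i| := by
              rw [sub_eq_add_neg]
              exact (abs_add_le _ _).trans_eq (by rw [abs_neg])
          _ ≤ |(Wb l *ᵥ e ε l) i| + |ε * ((Wa (l+1))ᵀ *ᵥ δ) i|
              + |ε * ((Q ε (l+1))ᵀ *ᵥ (Q ε (l+1) *ᵥ e ε (l+1))) i| := by
              linarith [abs_add_le ((Wb l *ᵥ e ε l) i) (ε * ((Wa (l+1))ᵀ *ᵥ δ) i)]
          _ = |(Wb l *ᵥ e ε l) i| + ε * |((Wa (l+1))ᵀ *ᵥ δ) i|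
              + ε * |((Q ε (l+1))ᵀ *ᵥ (Q ε (l+1) *ᵥ e ε (l+1))) i| := by
              rw [abs_mul, abs_mul, abs_of_pos hεpos]
      have h2' : ε * |((Wa (l+1))ᵀ *ᵥ δ) i| ≤ ε * (a * (C * ε^(s+1))) :=
        mul_le_mul_of_nonneg_left h2 hεpos.le
      have h3' : ε * |((Q ε (l+1))ᵀ *ᵥ (Q ε (l+1) *ᵥ e ε (l+1))) i|
          ≤ ε * (a * (a * (Cc * ε^(s+1)))) :=
        mul_le_mul_of_nonneg_left h3 hεpos.le
      have hee1 : ε * (a * (C * ε^(s+1))) = a*C*ε^(s+2) := by rw [pow_succ, pow_succ]; ring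
      have hee2 : ε * (a * (a * (Cc * ε^(s+1)))) = a*a*Cc*ε^(s+2) := by
        rw [pow_succ, pow_succ]; ring
      have hε2 : (0:ℝ) ≤ ε^(s+2) := pow_nonneg hεpos.le _
      calc |e ε (l+1) i - ε^(s+1) * (chain (l+1) *ᵥ w ε) i|
          ≤ a * (Cc * ε^(s+2)) + ε * (a * (C * ε^(s+1)))
            + ε * (a * (a * (Cc * ε^(s+1)))) := by linarith
        _ = (a*Cc + a*C + a*a*Cc) * ε^(s+2) := by rw [hee1, hee2]; ring
        _ ≤ (a*Cc + a*C + a*a*Cc + 1) * ε^(s+2) :=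
            mul_le_mul_of_nonneg_right (by linarith) hε2
  -- ## Step 6 : assembling the final estimate
  obtain ⟨Cf, hCf0, hCfb⟩ := href (m - l₀)
  refine ⟨Cf * Cz + 1, εz,
    by linarith [mul_pos hCf0 (lt_of_lt_of_le one_pos hCz1)], hεz0, ?_⟩
  intro ε hε i j
  have hεpos : 0 < ε := hε.1
  have hzj : |z ε T l₀ j| ≤ Cz := hzbd ε hε T le_rfl l₀ (by omega) j
  have hfin := hCfb (l₀+1) le_rfl (by omega) ε hε i
  have heqδ : δWb ε i j = e ε (l₀+1) i * z ε T l₀ j := by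
    rw [hδWb ε]
    have h := congrFun (heps ε hε) i
    simp only [Pi.smul_apply, Pi.sub_apply, smul_eq_mul] at h
    simp only [Matrix.smul_apply, Matrix.vecMulVec_apply, Pi.sub_apply, smul_eq_mul]
    rw [h]
    ring
  have htarg : ε ^ (m - l₀) * vecMulVec (chain (l₀ + 1) *ᵥ (y T - ytil ε)) (z ε T l₀) i j
      = (ε ^ (m - l₀) * (chain (l₀+1) *ᵥ w ε) i) * z ε T l₀ j := by
    rw [← hwdef ε, Matrix.vecMulVec_apply]
    ring
  rw [heqδ, htarg]
  have hdiff : δWb ε i j - δWb ε i j = 0 := sub_self _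
  calc |e ε (l₀+1) i * z ε T l₀ j - ε ^ (m - l₀) * (chain (l₀+1) *ᵥ w ε) i * z ε T l₀ j|
      = |e ε (l₀+1) i - ε ^ (m - l₀) * (chain (l₀+1) *ᵥ w ε) i| * |z ε T l₀ j| := by
        rw [← abs_mul]; ring_nf
    _ ≤ (Cf * ε^(m - l₀ + 1)) * Cz :=
        mul_le_mul hfin hzj (abs_nonneg _)
          (mul_nonneg hCf0.le (pow_nonneg hεpos.le _))
    _ = (Cf * Cz) * ε^(m - l₀ + 1) := by ring
    _ ≤ (Cf * Cz + 1) * ε^(m - l₀ + 1) :=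
        mul_le_mul_of_nonneg_right (by linarith) (pow_nonneg hεpos.le _)
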